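/- Let c ∈ [0, π/2) and let η : [-1,1] → ℝ be continuous and odd (η(-t) = -η(t)). If φ : [-1,1] → ℝ is twice continuously differentiable, satisfies φ''(t) + c²·φ(t) + η(t) = 0 on [-1,1], and φ(-1) = φ(1) = 0, then φ is odd; in particular φ(0) = 0. -/

import Mathlib

open Real Set

/-- Symmetry principle: if `φ'' + c²φ + η = 0` on `[-1,1]` with `η` odd and `φ(±1)=0`,
and `c < π/2`, then `φ` is odd; in particular `φ(0)=0`. -/
theorem stmt_1 (c : ℝ) (hc : c ∈ Set.Ico 0 (π / 2))
    (η : ℝ → ℝ) (hηcont : ContinuousOn η (Set.Icc (-1 : ℝ) 1))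
    (hηodd : ∀ t ∈ Set.Icc (-1 : ℝ) 1, η (-t) = -η t)
    (φ φ' φ'' : ℝ → ℝ)
    (hd1 : ∀ t ∈ Set.Icc (-1 : ℝ) 1, HasDerivAt φ (φ' t) t)
    (hd2 : ∀ t ∈ Set.Icc (-1 : ℝ) 1, HasDerivAt φ' (φ'' t) t)
    (hcont : ContinuousOn φ'' (Set.Icc (-1 : ℝ) 1))
    (hode : ∀ t ∈ Set.Icc (-1 : ℝ) 1, φ'' t + c ^ 2 * φ t + η t = 0)
    (hbd1 : φ (-1) = 0) (hbd2 : φ 1 = 0) :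
    (∀ t ∈ Set.Icc (-1 : ℝ) 1, φ (-t) = -φ t) ∧ φ 0 = 0 := by
  obtain ⟨hc0, hc2⟩ := hc
  have hmem : ∀ t ∈ Set.Icc (-1 : ℝ) 1, -t ∈ Set.Icc (-1 : ℝ) 1 := by
    intro t ht
    simp only [Set.mem_Icc] at *
    constructor <;> linarith [ht.1, ht.2]
  -- positivity of cos (c t)
  have hw : ∀ t ∈ Set.Icc (-1 : ℝ) 1, 0 < Real.cos (c * t) := by
    intro t ht
    apply Real.cos_pos_of_mem_Ioo
    simp only [Set.mem_Icc] at ht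
    constructor
    · nlinarith [ht.1, ht.2]
    · nlinarith [ht.1, ht.2]
  set g : ℝ → ℝ := fun t => φ t + φ (-t) with hgdef
  set g' : ℝ → ℝ := fun t => φ' t - φ' (-t) with hg'def
  set g'' : ℝ → ℝ := fun t => φ'' t + φ'' (-t) with hg''def
  have hgd1 : ∀ t ∈ Set.Icc (-1 : ℝ) 1, HasDerivAt g (g' t) t := by
    intro t ht
    have h2 : HasDerivAt (fun s => φ (-s)) (φ' (-t) * (-1)) t :=
      (hd1 (-t) (hmem t ht)).comp t (hasDerivAt_neg t)
    have := (hd1 t ht).add h2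
    refine this.congr_deriv ?_
    simp [hg'def]; ring
  have hgd2 : ∀ t ∈ Set.Icc (-1 : ℝ) 1, HasDerivAt g' (g'' t) t := by
    intro t ht
    have h2 : HasDerivAt (fun s => φ' (-s)) (φ'' (-t) * (-1)) t :=
      (hd2 (-t) (hmem t ht)).comp t (hasDerivAt_neg t)
    have := (hd2 t ht).sub h2
    refine this.congr_deriv ?_
    simp only [hg''def]; ring
  have hgode : ∀ t ∈ Set.Icc (-1 : ℝ) 1, g'' t = -(c ^ 2) * g t := by
    intro t ht
    have h1 := hode t ht
    have h2 := hode (-t) (hmem t ht)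
    have h3 := hηodd t ht
    simp only [hg''def, hgdef]
    rw [h3] at h2
    ring_nf
    ring_nf at h1 h2
    linarith
  set w : ℝ → ℝ := fun t => Real.cos (c * t) with hwdef
  set w' : ℝ → ℝ := fun t => -Real.sin (c * t) * c with hw'def
  have hct : ∀ t : ℝ, HasDerivAt (fun s : ℝ => c * s) c t := by
    intro t
    simpa using (hasDerivAt_id t).const_mul c
  have hwd : ∀ t : ℝ, HasDerivAt w (w' t) t := by
    intro t
    exact ((Real.hasDerivAt_cos (c * t)).comp t (hct t)).congr_deriv (by simp only [hw'def])
  have hw'd : ∀ t : ℝ, HasDerivAt w' (-(c ^ 2) * w t) t := by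
    intro t
    have := ((Real.hasDerivAt_sin (c * t)).comp t (hct t)).neg.mul_const c
    refine this.congr_deriv ?_
    simp [hwdef]; ring
  set r : ℝ → ℝ := fun t => g' t * w t - g t * w' t with hrdef
  have hrd : ∀ t ∈ Set.Icc (-1 : ℝ) 1, HasDerivAt r 0 t := by
    intro t ht
    have := ((hgd2 t ht).mul (hwd t)).sub ((hgd1 t ht).mul (hw'd t))
    refine this.congr_deriv ?_
    rw [hgode t ht]
    ring
  have hrc : ContinuousOn r (Set.Icc (-1 : ℝ) 1) := fun t ht =>
    (hrd t ht).continuousAt.continuousWithinAt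
  have hrconst : ∀ t ∈ Set.Icc (-1 : ℝ) 1, r t = r (-1) :=
    constant_of_has_deriv_right_zero hrc (fun x hx =>
      (hrd x (Set.Ico_subset_Icc_self hx)).hasDerivWithinAt)
  have hg1 : g 1 = 0 := by simp [hgdef, hbd1, hbd2]
  have hgm1 : g (-1) = 0 := by simp [hgdef, hbd1, hbd2]
  have h1mem : (1 : ℝ) ∈ Set.Icc (-1 : ℝ) 1 := by norm_num
  have hm1mem : (-1 : ℝ) ∈ Set.Icc (-1 : ℝ) 1 := by norm_num
  have hr1 : r 1 = r (-1) := hrconst 1 h1mem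
  have hg'1 : g' 1 = 0 := by
    have hwpos := hw 1 h1mem
    simp only [hrdef, hg1, hgm1, hwdef, hg'def] at hr1 hwpos ⊢
    simp only [neg_neg, zero_mul, sub_zero, mul_neg_one, mul_one, Real.cos_neg] at hr1 hwpos
    nlinarith [hwpos, hr1]
  have hr0 : ∀ t ∈ Set.Icc (-1 : ℝ) 1, r t = 0 := by
    intro t ht
    rw [hrconst t ht, ← hr1]
    simp [hrdef, hg1, hg'1]
  -- quotient q = g / w is constant
  set q : ℝ → ℝ := fun t => g t / w t with hqdef
  have hqd : ∀ t ∈ Set.Icc (-1 : ℝ) 1, HasDerivAt q 0 t := by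
    intro t ht
    have hwne : w t ≠ 0 := ne_of_gt (hw t ht)
    have := (hgd1 t ht).div (hwd t) hwne
    have hz : (g' t * w t - g t * w' t) / (w t) ^ 2 = 0 := by
      rw [show g' t * w t - g t * w' t = r t from rfl, hr0 t ht]
      simp
    rwa [hz] at this
  have hqc : ContinuousOn q (Set.Icc (-1 : ℝ) 1) := fun t ht =>
    (hqd t ht).continuousAt.continuousWithinAt
  have hqconst : ∀ t ∈ Set.Icc (-1 : ℝ) 1, q t = q (-1) :=
    constant_of_has_deriv_right_zero hqc (fun x hx =>
      (hqd x (Set.Ico_subset_Icc_self hx)).hasDerivWithinAt)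
  have hgzero : ∀ t ∈ Set.Icc (-1 : ℝ) 1, g t = 0 := by
    intro t ht
    have hq := hqconst t ht
    have : q t = 0 := by rw [hq]; simp [hqdef, hgm1]
    have hwne : w t ≠ 0 := ne_of_gt (hw t ht)
    rw [hqdef] at this
    exact (div_eq_zero_iff.mp this).resolve_right hwne
  have h0mem : (0 : ℝ) ∈ Set.Icc (-1 : ℝ) 1 := by norm_num
  constructor
  · intro t ht
    have := hgzero t ht
    simp only [hgdef] at this
    linarith
  · have := hgzero 0 h0mem
    simp only [hgdef, neg_zero] at this
    linarith
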